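/- The centralizer algebra of the image of (S_m)ⁿ acting on (V₁⊗⋯⊗Vₙ)^{⊗m} by permuting each i-th tensor slot independently equals the span of the image of GL(V₁)×⋯×GL(Vₙ) under μ(g₁,…,gₙ) = (g₁^{⊗m})⊗⋯⊗(gₙ^{⊗m}) (up to the canonical reshuffling isomorphism). -/

import Mathlib

open scoped Classical

/-- The matrix of `μ(g₁,…,gₙ) = (g₁^{⊗m})⊗⋯⊗(gₙ^{⊗m})` (up to the canonical reshuffling)
acting on `V^{⊗m} = (V₁⊗⋯⊗Vₙ)^{⊗m}`, with basis indexed by `Fin m → ∀ i, Fin (d i)`. -/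
noncomputable def muMat {k : Type*} [Field k] {n m : ℕ} {d : Fin n → ℕ}
    (g : ∀ i, Matrix (Fin (d i)) (Fin (d i)) k) :
    Matrix (Fin m → ∀ i, Fin (d i)) (Fin m → ∀ i, Fin (d i)) k :=
  fun a b => ∏ j, ∏ i, g i (a j i) (b j i)

/-- The matrix of `ρ(σ₁,…,σₙ)`, permuting the `m` slots of the `i`-th tensor factor
independently: `ρ(σ)(⊗ᵢ⊗ⱼ v_{ij}) = ⊗ᵢ⊗ⱼ v_{i σᵢ⁻¹(j)}`. -/
noncomputable def rhoMat {k : Type*} [Field k] {n m : ℕ} {d : Fin n → ℕ}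
    (σ : Fin n → Equiv.Perm (Fin m)) :
    Matrix (Fin m → ∀ i, Fin (d i)) (Fin m → ∀ i, Fin (d i)) k :=
  fun b a => if ∀ j i, b j i = a ((σ i)⁻¹ j) i then 1 else 0

section Aux

variable {k : Type*} [Field k]




/-- Vandermonde extraction: if a polynomial expression with module coefficients lies in a
submodule at `p` points with distinct parameters, then all coefficients lie in it. -/
theorem vandermonde_extract {M : Type*} [AddCommGroup M] [Module k M]
    (S : Submodule k M) {p : ℕ} (t : Fin p → k) (ht : Function.Injective t)
    (C : Fin p → M) (h : ∀ s, (∑ r : Fin p, t s ^ (r : ℕ) • C r) ∈ S) : ∀ r, C r ∈ S := by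
  intro r
  set V := Matrix.vandermonde t with hV
  have hdet : IsUnit V.det := (Matrix.det_vandermonde_ne_zero_iff.mpr ht).isUnit
  have hVV : V⁻¹ * V = 1 := Matrix.nonsing_inv_mul V hdet
  have key : C r = ∑ s, V⁻¹ r s • ∑ r', V s r' • C r' := by
    have h1 : C r = ∑ r', (1 : Matrix (Fin p) (Fin p) k) r r' • C r' := by
      simp [Matrix.one_apply, ite_smul]
    calc C r = ∑ r', (1 : Matrix (Fin p) (Fin p) k) r r' • C r' := h1
      _ = ∑ r', ((V⁻¹ * V) r r') • C r' := by rw [hVV]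
      _ = ∑ r', ∑ s, (V⁻¹ r s * V s r') • C r' := by
          simp [Matrix.mul_apply, Finset.sum_smul]
      _ = ∑ s, ∑ r', (V⁻¹ r s * V s r') • C r' := Finset.sum_comm
      _ = ∑ s, V⁻¹ r s • ∑ r', V s r' • C r' := by
          simp [Finset.smul_sum, mul_smul]
  rw [key]
  refine S.sum_mem fun s _ => S.smul_mem _ ?_
  have : ∑ r', V s r' • C r' = ∑ r' : Fin p, t s ^ (r' : ℕ) • C r' := by
    simp [hV, Matrix.vandermonde]
  rw [this]
  exact h s


/-- The matrix of `g^{⊗m}` on `W^{⊗m}`. -/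
noncomputable def pm {m N : ℕ} (g : Matrix (Fin N) (Fin N) k) :
    Matrix (Fin m → Fin N) (Fin m → Fin N) k :=
  fun u v => ∏ j, g (u j) (v j)

theorem eval_charpoly_eq {N : ℕ} (M : Matrix (Fin N) (Fin N) k) (c : k) :
    (Matrix.charpoly M).eval c = (c • (1 : Matrix (Fin N) (Fin N) k) - M).det := by
  have : (Matrix.charpoly M).eval c
      = ((Matrix.charmatrix M).map (Polynomial.evalRingHom c)).det := by
    rw [Matrix.charpoly]
    rw [show ((Matrix.charmatrix M).map (Polynomial.evalRingHom c))
        = (Polynomial.evalRingHom c).mapMatrix (Matrix.charmatrix M) from rfl]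
    rw [← RingHom.map_det]
    rfl
  rw [this]
  congr 1
  ext i j
  by_cases h : i = j <;>
    simp [h, Matrix.charmatrix_apply, Matrix.map_apply, Matrix.one_apply,
      Matrix.sub_apply, Matrix.smul_apply, Matrix.diagonal_apply]

/-- coefficient matrices of `pm (g + c•1)` as polynomial in `c` -/
noncomputable def pmCoeff {m N : ℕ} (g : Matrix (Fin N) (Fin N) k) (r : Fin (m + 1)) :
    Matrix (Fin m → Fin N) (Fin m → Fin N) k :=
  fun u v => ∑ A ∈ Finset.univ.powerset.filter (fun A : Finset (Fin m) => A.card = (r : ℕ)),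
    (∏ j ∈ A, (if u j = v j then (1 : k) else 0)) * ∏ j ∈ Finset.univ \ A, g (u j) (v j)

theorem card_lt_succ {m : ℕ} (A : Finset (Fin m)) : A.card < m + 1 :=
  Nat.lt_succ_of_le (by simpa using Finset.card_le_univ A)

theorem pm_add_expand {m N : ℕ} (g : Matrix (Fin N) (Fin N) k) (c : k) :
    pm (m := m) (g + c • 1) = ∑ r : Fin (m + 1), c ^ (r : ℕ) • pmCoeff g r := by
  funext u v
  have lhs : pm (m := m) (g + c • 1) u v
      = ∑ A ∈ (Finset.univ : Finset (Fin m)).powerset,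
          c ^ A.card * ((∏ j ∈ A, (if u j = v j then (1 : k) else 0)) *
            ∏ j ∈ Finset.univ \ A, g (u j) (v j)) := by
    have : pm (m := m) (g + c • 1) u v
        = ∏ j, (c * (if u j = v j then (1 : k) else 0) + g (u j) (v j)) := by
      unfold pm
      exact Finset.prod_congr rfl fun j _ => by
        simp [Matrix.add_apply, Matrix.smul_apply, Matrix.one_apply, add_comm]
    rw [this, Finset.prod_add]
    apply Finset.sum_congr rfl
    intro A _
    rw [Finset.prod_mul_distrib, Finset.prod_const]
    ring
  have rhs : (∑ r : Fin (m + 1), c ^ (r : ℕ) • pmCoeff g r) u v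
      = ∑ r : Fin (m + 1),
          ∑ A ∈ Finset.univ.powerset.filter
            (fun A : Finset (Fin m) => (⟨A.card, card_lt_succ A⟩ : Fin (m + 1)) = r),
            c ^ A.card * ((∏ j ∈ A, (if u j = v j then (1 : k) else 0)) *
              ∏ j ∈ Finset.univ \ A, g (u j) (v j)) := by
    simp only [Matrix.sum_apply, Matrix.smul_apply, pmCoeff, smul_eq_mul, Finset.mul_sum]
    apply Finset.sum_congr rfl
    intro r _
    apply Finset.sum_congr
    · apply Finset.filter_congr
      intro A _
      simp [Fin.ext_iff]
    · intro A hA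
      have : A.card = (r : ℕ) := by
        have := (Finset.mem_filter.mp hA).2
        simpa [Fin.ext_iff] using this
      rw [this]
  rw [lhs, rhs, Finset.sum_fiberwise_of_maps_to (fun A _ => Finset.mem_univ _)]

theorem pmCoeff_zero {m N : ℕ} (g : Matrix (Fin N) (Fin N) k) :
    pmCoeff (m := m) g 0 = pm g := by
  funext u v
  have : Finset.univ.powerset.filter (fun A : Finset (Fin m) => A.card = ((0 : Fin (m+1)) : ℕ))
      = {∅} := by
    ext A
    simp [Finset.card_eq_zero]
  rw [pmCoeff, this]
  simp [pm]

theorem pm_mem_span_unit {m N : ℕ} [CharZero k] (g : Matrix (Fin N) (Fin N) k) :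
    pm (m := m) g ∈ Submodule.span k
      {Y : Matrix (Fin m → Fin N) (Fin m → Fin N) k | ∃ h, IsUnit h ∧ Y = pm h} := by
  set q := Matrix.charpoly (-g) with hq
  have hq0 : q ≠ 0 := (Matrix.charpoly_monic _).ne_zero
  have hroots : {x : k | q.IsRoot x}.Finite := Polynomial.finite_setOf_isRoot hq0
  have hinf : ({x : k | q.IsRoot x}ᶜ : Set k).Infinite := hroots.infinite_compl
  have : Infinite ({x : k | q.IsRoot x}ᶜ : Set k) := hinf.to_subtype
  let e : Fin (m + 1) ↪ ({x : k | q.IsRoot x}ᶜ : Set k) :=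
    Fin.valEmbedding.trans (Infinite.natEmbedding _)
  set t : Fin (m + 1) → k := fun r => (e r : k) with htdef
  have htinj : Function.Injective t := fun a b hab => e.injective (Subtype.ext hab)
  have hunit : ∀ s, IsUnit (g + t s • (1 : Matrix (Fin N) (Fin N) k)) := by
    intro s
    rw [Matrix.isUnit_iff_isUnit_det, isUnit_iff_ne_zero]
    have hne : ¬ q.IsRoot (t s) := (e s).2
    intro hdet
    apply hne
    rw [Polynomial.IsRoot, hq, eval_charpoly_eq]
    convert hdet using 2
    abel
  have hmem : ∀ s, (∑ r : Fin (m+1), t s ^ (r : ℕ) • pmCoeff g r) ∈ Submodule.span k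
      {Y : Matrix (Fin m → Fin N) (Fin m → Fin N) k | ∃ h, IsUnit h ∧ Y = pm h} := by
    intro s
    rw [← pm_add_expand]
    exact Submodule.subset_span ⟨g + t s • 1, hunit s, rfl⟩
  have := vandermonde_extract _ t htinj (pmCoeff g) hmem 0
  rwa [pmCoeff_zero] at this


theorem neg_one_pow_powerset {β : Type*} [DecidableEq β] (s : Finset β) :
    ∑ T ∈ s.powerset, (-1 : k) ^ T.card = if s = ∅ then 1 else 0 := by
  have := Finset.sum_powerset_neg_one_pow_card (x := s)
  calc ∑ T ∈ s.powerset, (-1 : k) ^ T.card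
      = ((∑ T ∈ s.powerset, (-1 : ℤ) ^ T.card : ℤ) : k) := by push_cast; ring_nf
    _ = if s = ∅ then 1 else 0 := by rw [this]; split <;> simp

/-- Polarization / inclusion–exclusion. -/
theorem incl_excl {α : Type*} [Fintype α] [DecidableEq α] (x : α → α → k) :
    ∑ τ : Equiv.Perm α, ∏ j, x j (τ j)
    = ∑ S ∈ (Finset.univ : Finset α).powerset,
        (-1 : k) ^ (Fintype.card α + S.card) * ∏ j, ∑ s ∈ S, x j s := by
  -- expand the products on RHS
  have step1 : ∀ S : Finset α, (∏ j, ∑ s ∈ S, x j s)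
      = ∑ f ∈ Fintype.piFinset (fun _ : α => S), ∏ j, x j (f j) :=
    fun S => Finset.prod_univ_sum _ _
  simp_rw [step1, Finset.mul_sum]
  -- turn inner sums into sums over all functions with an indicator
  have step2 : ∀ S : Finset α,
      (∑ f ∈ Fintype.piFinset (fun _ : α => S),
        (-1 : k) ^ (Fintype.card α + S.card) * ∏ j, x j (f j))
      = ∑ f : α → α, (if ∀ j, f j ∈ S then
          (-1 : k) ^ (Fintype.card α + S.card) * ∏ j, x j (f j) else 0) := by
    intro S
    rw [eq_comm]
    have hiff : ∀ f : α → α, (∀ j, f j ∈ S) ↔ f ∈ Fintype.piFinset (fun _ : α => S) :=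
      fun f => (Fintype.mem_piFinset).symm
    simp_rw [hiff]
    rw [Finset.sum_ite_mem, Finset.univ_inter]
  simp_rw [step2]
  rw [Finset.sum_comm]
  have inner : ∀ f : α → α,
      (∑ S ∈ (Finset.univ : Finset α).powerset,
        if ∀ j, f j ∈ S then (-1 : k) ^ (Fintype.card α + S.card) * ∏ j, x j (f j) else 0)
      = if Function.Bijective f then ∏ j, x j (f j) else 0 := by
    intro f
    set R := Finset.image f Finset.univ with hR
    have hcond : ∀ S : Finset α, (∀ j, f j ∈ S) ↔ R ⊆ S := by
      intro S
      constructor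
      · intro h y hy
        obtain ⟨j, _, rfl⟩ := Finset.mem_image.mp hy
        exact h j
      · intro h j
        exact h (Finset.mem_image_of_mem f (Finset.mem_univ j))
    simp_rw [hcond]
    rw [← Finset.sum_filter]
    have hreindex :
        (∑ S ∈ (Finset.univ : Finset α).powerset.filter (fun S => R ⊆ S),
          (-1 : k) ^ (Fintype.card α + S.card) * ∏ j, x j (f j))
        = ∑ T ∈ (Finset.univ \ R).powerset,
            (-1 : k) ^ (Fintype.card α + R.card + T.card) * ∏ j, x j (f j) := by
      refine Finset.sum_nbij' (fun S => S \ R) (fun T => R ∪ T) ?_ ?_ ?_ ?_ ?_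
      · intro S hS
        rw [Finset.mem_powerset]
        exact Finset.sdiff_subset_sdiff (Finset.mem_powerset.mp (Finset.mem_filter.mp hS).1)
          (le_refl R)
      · intro T hT
        rw [Finset.mem_filter, Finset.mem_powerset]
        refine ⟨Finset.union_subset (Finset.subset_univ R) (Finset.subset_univ T),
          Finset.subset_union_left⟩
      · intro S hS
        have hRS := (Finset.mem_filter.mp hS).2
        show R ∪ S \ R = S
        rw [Finset.union_sdiff_of_subset hRS]
      · intro T hT
        have hTd : Disjoint R T := by
          have := Finset.mem_powerset.mp hT
          exact Finset.disjoint_left.mpr fun a haR haT =>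
            (Finset.mem_sdiff.mp (this haT)).2 haR
        show (R ∪ T) \ R = T
        rw [Finset.union_sdiff_cancel_left hTd]
      · intro S hS
        have hRS := (Finset.mem_filter.mp hS).2
        have hcard : S.card = R.card + (S \ R).card := by
          rw [← Finset.card_union_of_disjoint Finset.sdiff_disjoint.symm,
            Finset.union_sdiff_of_subset hRS]
        rw [hcard, ← add_assoc]
    rw [hreindex]
    have hpull : ∑ T ∈ (Finset.univ \ R).powerset,
        (-1 : k) ^ (Fintype.card α + R.card + T.card) * ∏ j, x j (f j)
        = ((-1 : k) ^ (Fintype.card α + R.card) * ∏ j, x j (f j))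
            * ∑ T ∈ (Finset.univ \ R).powerset, (-1 : k) ^ T.card := by
      rw [Finset.mul_sum]
      apply Finset.sum_congr rfl
      intro T _
      rw [pow_add]
      ring
    rw [hpull, neg_one_pow_powerset]
    by_cases hbij : Function.Bijective f
    · have hRuniv : R = Finset.univ := by
        apply Finset.eq_univ_of_forall
        intro y
        obtain ⟨j, rfl⟩ := hbij.2 y
        exact Finset.mem_image_of_mem f (Finset.mem_univ j)
      have h1 : Finset.univ \ R = ∅ := by rw [hRuniv, Finset.sdiff_self]
      have h2 : R.card = Fintype.card α := by rw [hRuniv, Finset.card_univ]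
      rw [h1, if_pos rfl, if_pos hbij, h2, mul_one, ← two_mul, pow_mul]
      simp
    · have h1 : Finset.univ \ R ≠ ∅ := by
        intro hcontra
        apply hbij
        apply Function.Surjective.bijective_of_finite
        intro y
        have : y ∈ R := by
          by_contra hy
          have : y ∈ Finset.univ \ R := Finset.mem_sdiff.mpr ⟨Finset.mem_univ y, hy⟩
          rw [hcontra] at this
          exact absurd this (Finset.notMem_empty y)
        obtain ⟨j, _, hj⟩ := Finset.mem_image.mp this
        exact ⟨j, hj⟩
      rw [if_neg h1, if_neg hbij, mul_zero]
  simp_rw [inner]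
  rw [Finset.sum_ite, Finset.sum_const_zero, add_zero]
  refine Finset.sum_nbij' (fun τ : Equiv.Perm α => (τ : α → α))
    (fun f => if h : Function.Bijective f then Equiv.ofBijective f h else 1) ?_ ?_ ?_ ?_ ?_
  · intro τ _
    exact Finset.mem_filter.mpr ⟨Finset.mem_univ _, τ.bijective⟩
  · intro f _
    exact Finset.mem_univ _
  · intro τ _
    show (if h : Function.Bijective ⇑τ then Equiv.ofBijective ⇑τ h else 1) = τ
    rw [dif_pos τ.bijective]
    exact Equiv.ext fun y => rfl
  · intro f hf
    show ⇑(if h : Function.Bijective f then Equiv.ofBijective f h else 1) = f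
    rw [dif_pos (Finset.mem_filter.mp hf).2]
    rfl
  · intro τ _
    rfl

/-- Symmetrized products lie in the span of `pm` of invertible matrices. -/
theorem sym_mem {m N : ℕ} [CharZero k] (h : Fin m → Matrix (Fin N) (Fin N) k) :
    (fun u v => ∑ τ : Equiv.Perm (Fin m), ∏ j, h (τ j) (u j) (v j) :
      Matrix (Fin m → Fin N) (Fin m → Fin N) k)
    ∈ Submodule.span k
      {Y : Matrix (Fin m → Fin N) (Fin m → Fin N) k | ∃ g, IsUnit g ∧ Y = pm g} := by
  have expand : (fun u v => ∑ τ : Equiv.Perm (Fin m), ∏ j, h (τ j) (u j) (v j) :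
      Matrix (Fin m → Fin N) (Fin m → Fin N) k)
      = ∑ S ∈ (Finset.univ : Finset (Fin m)).powerset,
          ((-1 : k) ^ (Fintype.card (Fin m) + S.card)) • pm (∑ s ∈ S, h s) := by
    funext u v
    have := incl_excl (α := Fin m) (k := k) (fun j s => h s (u j) (v j))
    rw [show (∑ τ : Equiv.Perm (Fin m), ∏ j, h (τ j) (u j) (v j))
        = ∑ τ : Equiv.Perm (Fin m), ∏ j, (fun j s => h s (u j) (v j)) j (τ j) from rfl, this]
    rw [Matrix.sum_apply]
    apply Finset.sum_congr rfl
    intro S _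
    rw [Matrix.smul_apply, smul_eq_mul]
    congr 1
    unfold pm
    apply Finset.prod_congr rfl
    intro j _
    simp [Matrix.sum_apply]
  rw [expand]
  exact Submodule.sum_mem _ fun S _ => Submodule.smul_mem _ _ (pm_mem_span_unit _)

/-- The symmetrization of an elementary tensor `E_{a,b}` lies in the span. -/
theorem F_mem {m N : ℕ} [CharZero k] (a b : Fin m → Fin N) :
    (fun u v => ∑ τ : Equiv.Perm (Fin m),
        if ∀ j, u j = a (τ j) ∧ v j = b (τ j) then (1 : k) else 0 :
      Matrix (Fin m → Fin N) (Fin m → Fin N) k)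
    ∈ Submodule.span k
      {Y : Matrix (Fin m → Fin N) (Fin m → Fin N) k | ∃ g, IsUnit g ∧ Y = pm g} := by
  have key : (fun u v => ∑ τ : Equiv.Perm (Fin m),
        if ∀ j, u j = a (τ j) ∧ v j = b (τ j) then (1 : k) else 0 :
      Matrix (Fin m → Fin N) (Fin m → Fin N) k)
      = (fun u v => ∑ τ : Equiv.Perm (Fin m),
          ∏ j, (fun p q => if p = a (τ j) ∧ q = b (τ j) then (1 : k) else 0) (u j) (v j)) := by
    funext u v
    apply Finset.sum_congr rfl
    intro τ _
    rw [Finset.prod_boole]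
    simp
  rw [key]
  exact sym_mem (fun s => fun p q => if p = a s ∧ q = b s then (1 : k) else 0)




/-- The product "tensoring" of per-factor matrices into one big matrix. -/
noncomputable def psi {n m : ℕ} {d : Fin n → ℕ}
    (F : ∀ i, Matrix (Fin m → Fin (d i)) (Fin m → Fin (d i)) k) :
    Matrix (Fin m → ∀ i, Fin (d i)) (Fin m → ∀ i, Fin (d i)) k :=
  fun a b => ∏ i, F i (fun j => a j i) (fun j => b j i)

noncomputable def psiML (n m : ℕ) (d : Fin n → ℕ) :
    MultilinearMap k (fun i : Fin n => Matrix (Fin m → Fin (d i)) (Fin m → Fin (d i)) k)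
      (Matrix (Fin m → ∀ i, Fin (d i)) (Fin m → ∀ i, Fin (d i)) k) where
  toFun := psi
  map_update_add' := by
    intro _ F i x y
    funext a b
    show (∏ i', Function.update F i (x + y) i' (fun j => a j i') fun j => b j i') = _
    have hap : ∀ (z : Matrix (Fin m → Fin (d i)) (Fin m → Fin (d i)) k) (i' : Fin n),
        Function.update F i z i' (fun j => a j i') (fun j => b j i')
          = Function.update
              (fun i' => F i' (fun j => a j i') (fun j => b j i')) i
              (z (fun j => a j i) (fun j => b j i)) i' := by
      intro z i'
      exact Function.apply_update
        (fun i' (M : Matrix (Fin m → Fin (d i')) (Fin m → Fin (d i')) k) =>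
          M (fun j => a j i') fun j => b j i') F i z i'
    simp only [hap, Finset.prod_update_of_mem (Finset.mem_univ i)]
    have : ∀ z : Matrix (Fin m → Fin (d i)) (Fin m → Fin (d i)) k,
        (Function.update F i z) = Function.update F i z := fun _ => rfl
    show _ = psi (Function.update F i x) a b + psi (Function.update F i y) a b
    unfold psi
    simp only [hap, Finset.prod_update_of_mem (Finset.mem_univ i), Matrix.add_apply]
    ring
  map_update_smul' := by
    intro _ F i c x
    funext a b
    show (∏ i', Function.update F i (c • x) i' (fun j => a j i') fun j => b j i') = _
    have hap : ∀ (z : Matrix (Fin m → Fin (d i)) (Fin m → Fin (d i)) k) (i' : Fin n),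
        Function.update F i z i' (fun j => a j i') (fun j => b j i')
          = Function.update
              (fun i' => F i' (fun j => a j i') (fun j => b j i')) i
              (z (fun j => a j i) (fun j => b j i)) i' := by
      intro z i'
      exact Function.apply_update
        (fun i' (M : Matrix (Fin m → Fin (d i')) (Fin m → Fin (d i')) k) =>
          M (fun j => a j i') fun j => b j i') F i z i'
    simp only [hap, Finset.prod_update_of_mem (Finset.mem_univ i)]
    show _ = (c • psi (Function.update F i x)) a b
    unfold psi
    simp only [hap, Matrix.smul_apply, smul_eq_mul,
      Finset.prod_update_of_mem (Finset.mem_univ i)]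
    show _ = c * ∏ i', Function.update F i x i' (fun j => a j i') fun j => b j i'
    simp only [hap, Finset.prod_update_of_mem (Finset.mem_univ i)]
    ring

theorem psi_pm {n m : ℕ} {d : Fin n → ℕ} (g : ∀ i, Matrix (Fin (d i)) (Fin (d i)) k) :
    psi (fun i => pm (m := m) (g i)) = muMat g := by
  funext a b
  exact Finset.prod_comm

theorem psi_mem {n m : ℕ} {d : Fin n → ℕ} [CharZero k]
    (F : ∀ i, Matrix (Fin m → Fin (d i)) (Fin m → Fin (d i)) k)
    (hF : ∀ i, F i ∈ Submodule.span k
      {Y : Matrix (Fin m → Fin (d i)) (Fin m → Fin (d i)) k | ∃ g, IsUnit g ∧ Y = pm g}) :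
    psi F ∈ Submodule.span k
      {Y | ∃ g : ∀ i, Matrix (Fin (d i)) (Fin (d i)) k, (∀ i, IsUnit (g i)) ∧ Y = muMat g} := by
  have h' := fun i => Submodule.mem_span_set'.mp (hF i)
  choose p c v hv using h'
  have hFeq : F = fun i => ∑ r ∈ (Finset.univ : Finset (Fin (p i))), c i r • (v i r : Matrix _ _ k) := by
    funext i
    exact (hv i).symm
  have : psi F = psiML n m d F := rfl
  rw [this, hFeq, MultilinearMap.map_sum_finset]
  refine Submodule.sum_mem _ fun r _ => ?_
  rw [MultilinearMap.map_smul_univ]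
  refine Submodule.smul_mem _ _ ?_
  have hsel : ∀ i, ∃ gi : Matrix (Fin (d i)) (Fin (d i)) k,
      IsUnit gi ∧ (↑(v i (r i)) : Matrix (Fin m → Fin (d i)) (Fin m → Fin (d i)) k) = pm gi :=
    fun i => (v i (r i)).2
  choose g hg hgeq using hsel
  apply Submodule.subset_span
  refine ⟨g, hg, ?_⟩
  have heq2 : (fun i => (↑(v i (r i)) : Matrix (Fin m → Fin (d i)) (Fin m → Fin (d i)) k))
      = fun i => pm (g i) := funext fun i => hgeq i
  show psiML n m d (fun i => (↑(v i (r i)) : Matrix (Fin m → Fin (d i)) (Fin m → Fin (d i)) k)) = _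
  rw [heq2]
  exact psi_pm g

end Aux


section MainAux

variable {k : Type*} [Field k] {n m : ℕ} {d : Fin n → ℕ}

/-- The action of `(S_m)^n` on the index set. -/
def act (σ : Fin n → Equiv.Perm (Fin m)) (a : Fin m → ∀ i, Fin (d i)) :
    Fin m → ∀ i, Fin (d i) := fun j i => a (σ i j) i

/-- The inverse action. -/
def actInv (σ : Fin n → Equiv.Perm (Fin m)) (a : Fin m → ∀ i, Fin (d i)) :
    Fin m → ∀ i, Fin (d i) := fun j i => a ((σ i)⁻¹ j) i

theorem act_actInv (σ : Fin n → Equiv.Perm (Fin m)) (a : Fin m → ∀ i, Fin (d i)) :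
    act σ (actInv σ a) = a := by
  funext j i
  simp [act, actInv]

theorem actInv_act (σ : Fin n → Equiv.Perm (Fin m)) (a : Fin m → ∀ i, Fin (d i)) :
    actInv σ (act σ a) = a := by
  funext j i
  simp [act, actInv]

theorem collapse_right {ι : Type*} [Fintype ι] (f : ι → k) (c0 : ι) (P : ι → Prop)
    [∀ c, Decidable (P c)] (hP : ∀ c, P c ↔ c = c0) :
    ∑ c, f c * (if P c then (1 : k) else 0) = f c0 := by
  simp_rw [hP]
  simp

theorem collapse_left {ι : Type*} [Fintype ι] (f : ι → k) (c0 : ι) (P : ι → Prop)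
    [∀ c, Decidable (P c)] (hP : ∀ c, P c ↔ c = c0) :
    ∑ c, (if P c then (1 : k) else 0) * f c = f c0 := by
  simp_rw [hP]
  simp

theorem mul_rho_apply (X : Matrix (Fin m → ∀ i, Fin (d i)) (Fin m → ∀ i, Fin (d i)) k)
    (σ : Fin n → Equiv.Perm (Fin m)) (x y : Fin m → ∀ i, Fin (d i)) :
    (X * rhoMat σ : Matrix (Fin m → ∀ i, Fin (d i)) (Fin m → ∀ i, Fin (d i)) k) x y = X x (actInv σ y) := by
  rw [Matrix.mul_apply]
  unfold rhoMat
  exact collapse_right _ _ _ (fun c => by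
    rw [show (actInv σ y) = fun j i => y ((σ i)⁻¹ j) i from rfl]
    constructor
    · intro h; funext j i; exact h j i
    · intro h j i; rw [h])

theorem rho_mul_apply (X : Matrix (Fin m → ∀ i, Fin (d i)) (Fin m → ∀ i, Fin (d i)) k)
    (σ : Fin n → Equiv.Perm (Fin m)) (x y : Fin m → ∀ i, Fin (d i)) :
    (rhoMat σ * X : Matrix (Fin m → ∀ i, Fin (d i)) (Fin m → ∀ i, Fin (d i)) k) x y = X (act σ x) y := by
  rw [Matrix.mul_apply]
  unfold rhoMat
  refine collapse_left (fun c => X c y) (act σ x) _ (fun c => ?_)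
  constructor
  · intro h
    funext j i
    have := h (σ i j) i
    simpa [act] using this.symm
  · intro h j i
    rw [h]
    simp [act]

theorem mu_comm (g : ∀ i, Matrix (Fin (d i)) (Fin (d i)) k) (σ : Fin n → Equiv.Perm (Fin m)) :
    muMat g * rhoMat σ = rhoMat σ * muMat g := by
  ext x y
  rw [mul_rho_apply, rho_mul_apply]
  show (∏ j, ∏ i, g i (x j i) ((actInv σ y) j i)) = ∏ j, ∏ i, g i ((act σ x) j i) (y j i)
  rw [Finset.prod_comm]
  conv_rhs => rw [Finset.prod_comm]
  apply Finset.prod_congr rfl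
  intro i _
  refine Fintype.prod_equiv ((σ i)⁻¹ : Equiv.Perm (Fin m)) _ _ (fun j => ?_)
  simp [act, actInv]

end MainAux

/-- The centralizer algebra of the image of `(S_m)ⁿ` acting on
`(V₁⊗⋯⊗Vₙ)^{⊗m}` by permuting each tensor slot independently equals the span of the image
of `GL(V₁)×⋯×GL(Vₙ)` under `μ`. -/
theorem stmt_8 {k : Type*} [Field k] [IsAlgClosed k] [CharZero k] {n m : ℕ}
    (d : Fin n → ℕ) (X : Matrix (Fin m → ∀ i, Fin (d i)) (Fin m → ∀ i, Fin (d i)) k) :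
    (∀ σ : Fin n → Equiv.Perm (Fin m), X * rhoMat σ = rhoMat σ * X) ↔
    X ∈ Submodule.span k
      {Y | ∃ g : ∀ i, Matrix (Fin (d i)) (Fin (d i)) k, (∀ i, IsUnit (g i)) ∧ Y = muMat g} := by
  constructor
  · intro hX
    have hinv : ∀ (σ : Fin n → Equiv.Perm (Fin m)) a b, X (act σ a) (act σ b) = X a b := by
      intro σ a b
      have h1 : (X * rhoMat σ : Matrix (Fin m → ∀ i, Fin (d i)) (Fin m → ∀ i, Fin (d i)) k) a (act σ b)
          = (rhoMat σ * X : Matrix (Fin m → ∀ i, Fin (d i)) (Fin m → ∀ i, Fin (d i)) k) a (act σ b) := by rw [hX σ]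
      rw [mul_rho_apply, rho_mul_apply, actInv_act] at h1
      exact h1.symm
    set cG : k := (Fintype.card (∀ _ : Fin n, Equiv.Perm (Fin m)) : k) with hcG
    have hcG0 : cG ≠ 0 := Nat.cast_ne_zero.mpr Fintype.card_ne_zero
    set Φ : (Fin m → ∀ i, Fin (d i)) → (Fin m → ∀ i, Fin (d i)) →
        Matrix (Fin m → ∀ i, Fin (d i)) (Fin m → ∀ i, Fin (d i)) k := fun a b =>
      fun x y => ∑ σ : ∀ _ : Fin n, Equiv.Perm (Fin m),
        if x = act σ a ∧ y = act σ b then (1 : k) else 0 with hΦ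
    have claimA : X = ∑ a, ∑ b, (cG⁻¹ * X a b) • Φ a b := by
      funext x y
      have expand : (∑ a, ∑ b, (cG⁻¹ * X a b) • Φ a b) x y
          = ∑ a, ∑ b, ∑ σ : ∀ _ : Fin n, Equiv.Perm (Fin m),
              (cG⁻¹ * X a b) * (if x = act σ a ∧ y = act σ b then (1 : k) else 0) := by
        simp only [Matrix.sum_apply, Matrix.smul_apply, smul_eq_mul, hΦ, Finset.mul_sum]
        exact Finset.sum_congr rfl fun a _ => Finset.sum_congr rfl fun b _ => Finset.mul_sum _ _ _
      rw [expand]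
      have e1 : ∀ a, (∑ b, ∑ σ : ∀ _ : Fin n, Equiv.Perm (Fin m),
          (cG⁻¹ * X a b) * (if x = act σ a ∧ y = act σ b then (1 : k) else 0))
          = ∑ σ : ∀ _ : Fin n, Equiv.Perm (Fin m), ∑ b,
              (cG⁻¹ * X a b) * (if x = act σ a ∧ y = act σ b then (1 : k) else 0) :=
        fun a => Finset.sum_comm
      simp_rw [e1]
      rw [Finset.sum_comm]
      have hinner : ∀ σ : ∀ _ : Fin n, Equiv.Perm (Fin m),
          (∑ a, ∑ b, (cG⁻¹ * X a b) * (if x = act σ a ∧ y = act σ b then (1 : k) else 0))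
          = cG⁻¹ * X x y := by
        intro σ
        have hiffa : ∀ a, (x = act σ a) ↔ (a = actInv σ x) := by
          intro a
          constructor
          · intro h; rw [h, actInv_act]
          · intro h; rw [h, act_actInv]
        have hiffb : ∀ b, (y = act σ b) ↔ (b = actInv σ y) := by
          intro b
          constructor
          · intro h; rw [h, actInv_act]
          · intro h; rw [h, act_actInv]
        rw [Finset.sum_eq_single (actInv σ x)]
        · rw [Finset.sum_eq_single (actInv σ y)]
          · rw [if_pos ⟨(act_actInv σ x).symm, (act_actInv σ y).symm⟩, mul_one]
            have := hinv σ (actInv σ x) (actInv σ y)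
            rw [act_actInv, act_actInv] at this
            rw [← this]
          · intro b _ hb
            rw [if_neg, mul_zero]
            intro hcon
            exact hb ((hiffb b).mp hcon.2)
          · intro h
            exact absurd (Finset.mem_univ _) h
        · intro a _ ha
          apply Finset.sum_eq_zero
          intro b _
          rw [if_neg, mul_zero]
          intro hcon
          exact ha ((hiffa a).mp hcon.1)
        · intro h
          exact absurd (Finset.mem_univ _) h
      simp_rw [hinner]
      rw [Finset.sum_const, Finset.card_univ, nsmul_eq_mul, ← hcG, ← mul_assoc,
        mul_inv_cancel₀ hcG0, one_mul]
    have claimB : ∀ a b : Fin m → ∀ i, Fin (d i),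
        Φ a b ∈ Submodule.span k
          {Y | ∃ g : ∀ i, Matrix (Fin (d i)) (Fin (d i)) k, (∀ i, IsUnit (g i)) ∧ Y = muMat g} := by
      intro a b
      have hfac : Φ a b = psi (fun i =>
          (fun u v => ∑ τ : Equiv.Perm (Fin m),
            if ∀ j, u j = a (τ j) i ∧ v j = b (τ j) i then (1 : k) else 0 :
            Matrix (Fin m → Fin (d i)) (Fin m → Fin (d i)) k)) := by
        funext x y
        have hcond : ∀ σ : ∀ _ : Fin n, Equiv.Perm (Fin m),
            (x = act σ a ∧ y = act σ b)
            ↔ ∀ i, ∀ j, x j i = a (σ i j) i ∧ y j i = b (σ i j) i := by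
          intro σ
          simp only [act, funext_iff]
          constructor
          · rintro ⟨h1, h2⟩ i j
            exact ⟨h1 j i, h2 j i⟩
          · intro h
            exact ⟨fun j i => (h i j).1, fun j i => (h i j).2⟩
        show (∑ σ : ∀ _ : Fin n, Equiv.Perm (Fin m),
          if x = act σ a ∧ y = act σ b then (1 : k) else 0) = _
        simp_rw [hcond]
        show _ = ∏ i, ∑ τ : Equiv.Perm (Fin m),
          if ∀ j, x j i = a (τ j) i ∧ y j i = b (τ j) i then (1 : k) else 0
        rw [Finset.prod_univ_sum]
        rw [← Fintype.piFinset_univ]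
        apply Finset.sum_congr rfl
        intro σ _
        rw [Finset.prod_boole]
        simp
      rw [hfac]
      exact psi_mem _ (fun i => F_mem (fun j => a j i) (fun j => b j i))
    rw [claimA]
    exact Submodule.sum_mem _ fun a _ => Submodule.sum_mem _ fun b _ =>
      Submodule.smul_mem _ _ (claimB a b)
  · intro hX σ
    induction hX using Submodule.span_induction with
    | mem Y hY =>
      obtain ⟨g, _, rfl⟩ := hY
      exact mu_comm g σ
    | zero => simp
    | add Y Z _ _ hY hZ => rw [add_mul, mul_add, hY, hZ]
    | smul c Y _ hY => rw [Matrix.smul_mul, Matrix.mul_smul, hY]
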